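/- Let a, b ∈ ℂ with a² + b² ≠ 0, and let h₁, h₂ be functions holomorphic on a neighborhood of 0 in ℂ. Define x(u) = a/u + h₁(u) and y(u) = b/u + h₂(u) for u ≠ 0 near 0. Then there exist c ∈ ℂ with c² = a² + b² and a function g holomorphic on a (possibly smaller) neighborhood of 0 such that for all u ≠ 0 in that neighborhood, x'(u)² + y'(u)² = (c/u² + g(u))². In particular, the local square root of the arc length differential has a pole of order exactly 2 at u = 0 with zero residue, and x'² + y'² has a pole of order 4. -/

import Mathlib

open Complex

private lemma analyticAt_deriv {f : ℂ → ℂ} (hf : AnalyticAt ℂ f 0) :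
    AnalyticAt ℂ (deriv f) 0 := by
  obtain ⟨s, hs, hfs⟩ := hf.exists_mem_nhds_analyticOnNhd
  exact hfs.deriv 0 (mem_of_mem_nhds hs)

theorem pole_of_arc_length_at_infinity
    (a b : ℂ) (hab : a ^ 2 + b ^ 2 ≠ 0)
    (h₁ h₂ : ℂ → ℂ) (hh₁ : AnalyticAt ℂ h₁ 0) (hh₂ : AnalyticAt ℂ h₂ 0) :
    ∃ c : ℂ, c ^ 2 = a ^ 2 + b ^ 2 ∧
      ∃ g : ℂ → ℂ, AnalyticAt ℂ g 0 ∧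
        ∀ᶠ u in nhdsWithin (0 : ℂ) {(0 : ℂ)}ᶜ,
          (deriv (fun v => a / v + h₁ v) u) ^ 2 + (deriv (fun v => b / v + h₂ v) u) ^ 2 =
            (c / u ^ 2 + g u) ^ 2 := by
  set f₁ : ℂ → ℂ := deriv h₁ with hf₁def
  set f₂ : ℂ → ℂ := deriv h₂ with hf₂def
  have hf₁ : AnalyticAt ℂ f₁ 0 := analyticAt_deriv hh₁
  have hf₂ : AnalyticAt ℂ f₂ 0 := analyticAt_deriv hh₂
  set S : ℂ → ℂ := fun u => -2 * (a * f₁ u + b * f₂ u) + u ^ 2 * (f₁ u ^ 2 + f₂ u ^ 2)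
    with hSdef
  have hS : AnalyticAt ℂ S 0 := by
    apply AnalyticAt.add
    · exact analyticAt_const.mul ((analyticAt_const.mul hf₁).add (analyticAt_const.mul hf₂))
    · exact ((analyticAt_id.pow 2)).mul ((hf₁.pow 2).add (hf₂.pow 2))
  set P : ℂ → ℂ := fun u => (a ^ 2 + b ^ 2) + u ^ 2 * S u with hPdef
  have hP : AnalyticAt ℂ P 0 := analyticAt_const.add ((analyticAt_id.pow 2).mul hS)
  have hP0 : P 0 = a ^ 2 + b ^ 2 := by simp [hPdef]
  -- square root of P
  set q : ℂ → ℂ := fun u =>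
    Complex.exp ((Complex.log (a ^ 2 + b ^ 2) + Complex.log (P u / (a ^ 2 + b ^ 2))) / 2)
    with hqdef
  have hPdiv : AnalyticAt ℂ (fun u => P u / (a ^ 2 + b ^ 2)) 0 := hP.div analyticAt_const hab
  have hdiv0 : P 0 / (a ^ 2 + b ^ 2) = 1 := by rw [hP0]; exact div_self hab
  have hq : AnalyticAt ℂ q 0 :=
    ((analyticAt_const.add
      (hPdiv.clog (by rw [hdiv0]; exact Complex.one_mem_slitPlane))).div
      analyticAt_const (by norm_num)).cexp
  have hqsq : ∀ u : ℂ, P u ≠ 0 → q u ^ 2 = P u := by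
    intro u hu
    have : q u ^ 2 = Complex.exp (Complex.log (a ^ 2 + b ^ 2) +
        Complex.log (P u / (a ^ 2 + b ^ 2))) := by
      rw [hqdef]
      rw [sq, ← Complex.exp_add]
      ring_nf
    rw [this, Complex.exp_add, Complex.exp_log hab, Complex.exp_log (div_ne_zero hu hab)]
    field_simp
  set c : ℂ := q 0 with hcdef
  have hc2 : c ^ 2 = a ^ 2 + b ^ 2 := by
    rw [hcdef, hqsq 0 (by rw [hP0]; exact hab), hP0]
  have hc0 : c ≠ 0 := by
    intro h; apply hab; rw [← hc2, h]; ring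
  set g : ℂ → ℂ := fun u => S u / (q u + c) with hgdef
  have hg : AnalyticAt ℂ g 0 := by
    apply hS.div (hq.add analyticAt_const)
    intro h
    apply hc0
    have : (2 : ℂ) * c = 0 := by rw [two_mul]; exact h
    simpa using this
  refine ⟨c, hc2, g, hg, ?_⟩
  -- eventual facts in 𝓝 0
  have hPne : ∀ᶠ u in nhds (0 : ℂ), P u ≠ 0 :=
    hP.continuousAt.eventually_ne (by rw [hP0]; exact hab)
  have hqcne : ∀ᶠ u in nhds (0 : ℂ), q u + c ≠ 0 := by
    apply (hq.continuousAt.add continuousAt_const).eventually_ne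
    intro h
    apply hc0
    have : (2 : ℂ) * c = 0 := by rw [two_mul]; exact h
    simpa using this
  have hd₁ : ∀ᶠ u in nhds (0 : ℂ), DifferentiableAt ℂ h₁ u :=
    hh₁.eventually_analyticAt.mono fun _ h => h.differentiableAt
  have hd₂ : ∀ᶠ u in nhds (0 : ℂ), DifferentiableAt ℂ h₂ u :=
    hh₂.eventually_analyticAt.mono fun _ h => h.differentiableAt
  have hall : ∀ᶠ u in nhdsWithin (0 : ℂ) {(0 : ℂ)}ᶜ,
      P u ≠ 0 ∧ (q u + c ≠ 0 ∧ (DifferentiableAt ℂ h₁ u ∧ DifferentiableAt ℂ h₂ u)) :=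
    (hPne.and (hqcne.and (hd₁.and hd₂))).filter_mono nhdsWithin_le_nhds
  filter_upwards [hall, self_mem_nhdsWithin] with u hu hu0mem
  obtain ⟨hPu, hqcu, hd1u, hd2u⟩ := hu
  have hu0 : u ≠ 0 := hu0mem
  have hq2u : q u ^ 2 = P u := hqsq u hPu
  -- derivatives
  have hderiv : ∀ (k : ℂ) (h : ℂ → ℂ), DifferentiableAt ℂ h u →
      deriv (fun v => k / v + h v) u = -k / u ^ 2 + deriv h u := by
    intro k h hdh
    have h1 : HasDerivAt (fun v : ℂ => k / v) (-k / u ^ 2) u := by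
      have := (hasDerivAt_inv hu0).const_mul k
      simpa [div_eq_mul_inv, neg_div, mul_comm] using this
    exact (h1.add hdh.hasDerivAt).deriv
  rw [hderiv a h₁ hd1u, hderiv b h₂ hd2u]
  -- key identity: c / u^2 + g u = q u / u^2
  have hq2u' : q u ^ 2 = a ^ 2 + b ^ 2 +
      u ^ 2 * (-2 * (a * f₁ u + b * f₂ u) + u ^ 2 * (f₁ u ^ 2 + f₂ u ^ 2)) := by
    rw [hq2u]
  have hkey : c / u ^ 2 + g u = q u / u ^ 2 := by
    simp only [hgdef]
    field_simp
    linear_combination hc2 - hq2u'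
  rw [hkey, div_pow, hq2u]
  simp only [hPdef, hSdef]
  field_simp
  ring
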